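/- arXiv:1806.06007 — 3 statements merged into one kernel-verified Lean document; each statement's English description precedes it below -/
import Mathlib

section
/- The sequence of dominant roots (α_k) of the polynomials x^k − x^{k−1} − ⋯ − 1 is strictly increasing in k for k ≥ 2. -/
lemma kbonacci_inv_sum (k : ℕ) (x : ℝ) (hx : 0 < x)
    (hroot : x ^ k - ∑ i ∈ Finset.range k, x ^ i = 0) :
    ∑ i ∈ Finset.range k, (x⁻¹) ^ (i + 1) = 1 := by
  have hxk : (0:ℝ) < x ^ k := pow_pos hx k
  have hxne : x ≠ 0 := ne_of_gt hx
  have key : x ^ k * ∑ i ∈ Finset.range k, (x⁻¹) ^ (i + 1) = x ^ k * 1 := by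
    rw [Finset.mul_sum]
    have h1 : ∀ i ∈ Finset.range k, x ^ k * (x⁻¹) ^ (i + 1) = x ^ (k - 1 - i) := by
      intro i hi
      have hik : i + 1 ≤ k := Finset.mem_range.mp hi
      rw [inv_pow, mul_inv_eq_iff_eq_mul₀ (pow_ne_zero _ hxne), ← pow_add]
      congr 1
      omega
    rw [Finset.sum_congr rfl h1]
    have := Finset.sum_range_reflect (fun i => x ^ i) k
    rw [this, mul_one]
    linarith
  exact mul_left_cancel₀ (ne_of_gt hxk) (by rw [key, mul_one])

theorem kbonacci_roots_strict_mono (k : ℕ) (hk : 2 ≤ k) (α β : ℝ)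
    (hα : 0 < α) (hαroot : α ^ k - ∑ i ∈ Finset.range k, α ^ i = 0)
    (hβ : 0 < β) (hβroot : β ^ (k + 1) - ∑ i ∈ Finset.range (k + 1), β ^ i = 0) :
    α < β := by
  have h1 := kbonacci_inv_sum k α hα hαroot
  have h2 := kbonacci_inv_sum (k + 1) β hβ hβroot
  have hu : 0 < α⁻¹ := inv_pos.mpr hα
  have hv : 0 < β⁻¹ := inv_pos.mpr hβ
  have hsum : ∑ i ∈ Finset.range (k + 1), (β⁻¹) ^ (i + 1)
      < ∑ i ∈ Finset.range (k + 1), (α⁻¹) ^ (i + 1) := by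
    rw [h2, Finset.sum_range_succ, h1]
    have := pow_pos hu (k + 1)
    linarith
  have hvu : β⁻¹ < α⁻¹ := by
    by_contra h
    push_neg at h
    have : ∑ i ∈ Finset.range (k + 1), (α⁻¹) ^ (i + 1)
        ≤ ∑ i ∈ Finset.range (k + 1), (β⁻¹) ^ (i + 1) :=
      Finset.sum_le_sum fun i _ => pow_le_pow_left₀ (le_of_lt hu) h _
    linarith
  exact (inv_lt_inv₀ hβ hα).mp hvu
end

section
/- For k ≥ 2, every complex root λ of x^k − x^{k−1} − ⋯ − x − 1 other than the positive root α_k satisfies |λ| < 1. -/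
/-- If `s` is a positive root of `x^k = ∑ x^i` and `t > s`, then `t^k > ∑ t^i`. -/
lemma kb_sum_pow_lt_pow {k : ℕ} (hk : 1 ≤ k) {s t : ℝ} (hs : 0 < s) (hst : s < t)
    (hroot : s ^ k = ∑ i ∈ Finset.range k, s ^ i) :
    ∑ i ∈ Finset.range k, t ^ i < t ^ k := by
  have ht : 0 < t := hs.trans hst
  have key : ∀ i ∈ Finset.range k, t ^ i * s ^ k < s ^ i * t ^ k := by
    intro i hi
    rw [Finset.mem_range] at hi
    have e1 : s ^ k = s ^ i * s ^ (k - i) := by rw [← pow_add]; congr 1; omega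
    have e2 : t ^ k = t ^ i * t ^ (k - i) := by rw [← pow_add]; congr 1; omega
    have h1 : s ^ (k - i) < t ^ (k - i) := pow_lt_pow_left₀ hst hs.le (by omega)
    have hp : (0:ℝ) < t ^ i * s ^ i := by positivity
    calc t ^ i * s ^ k = (t ^ i * s ^ i) * s ^ (k - i) := by rw [e1]; ring
      _ < (t ^ i * s ^ i) * t ^ (k - i) := by exact (mul_lt_mul_iff_right₀ hp).2 h1
      _ = s ^ i * t ^ k := by rw [e2]; ring
  have hsum := Finset.sum_lt_sum_of_nonempty (Finset.nonempty_range_iff.2 (by omega)) key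
  rw [← Finset.sum_mul, ← Finset.sum_mul, ← hroot] at hsum
  have hsk : (0:ℝ) < s ^ k := pow_pos hs k
  refine (mul_lt_mul_iff_left₀ hsk).1 ?_
  rw [mul_comm (t ^ k)]
  exact hsum

/-- If `s` is a positive root of `x^k = ∑ x^i` and `0 < t < s`, then `t^k < ∑ t^i`. -/
lemma kb_pow_lt_sum_pow {k : ℕ} (hk : 1 ≤ k) {s t : ℝ} (ht : 0 < t) (hts : t < s)
    (hroot : s ^ k = ∑ i ∈ Finset.range k, s ^ i) :
    t ^ k < ∑ i ∈ Finset.range k, t ^ i := by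
  have hs : 0 < s := ht.trans hts
  have key : ∀ i ∈ Finset.range k, s ^ i * t ^ k < t ^ i * s ^ k := by
    intro i hi
    rw [Finset.mem_range] at hi
    have e1 : s ^ k = s ^ i * s ^ (k - i) := by rw [← pow_add]; congr 1; omega
    have e2 : t ^ k = t ^ i * t ^ (k - i) := by rw [← pow_add]; congr 1; omega
    have h1 : t ^ (k - i) < s ^ (k - i) := pow_lt_pow_left₀ hts ht.le (by omega)
    have hp : (0:ℝ) < t ^ i * s ^ i := by positivity
    calc s ^ i * t ^ k = (t ^ i * s ^ i) * t ^ (k - i) := by rw [e2]; ring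
      _ < (t ^ i * s ^ i) * s ^ (k - i) := by exact (mul_lt_mul_iff_right₀ hp).2 h1
      _ = t ^ i * s ^ k := by rw [e1]; ring
  have hsum := Finset.sum_lt_sum_of_nonempty (Finset.nonempty_range_iff.2 (by omega)) key
  rw [← Finset.sum_mul, ← Finset.sum_mul, ← hroot] at hsum
  have hsk : (0:ℝ) < s ^ k := pow_pos hs k
  refine (mul_lt_mul_iff_left₀ hsk).1 ?_
  rw [mul_comm (s ^ k) (t ^ k)] at hsum
  exact hsum

theorem kbonacci_other_roots_small (k : ℕ) (hk : 2 ≤ k) (α : ℝ) (hα : 0 < α)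
    (hαroot : α ^ k - ∑ i ∈ Finset.range k, α ^ i = 0)
    (lam : ℂ) (hlam : lam ^ k - ∑ i ∈ Finset.range k, lam ^ i = 0)
    (hne : lam ≠ (α : ℂ)) : ‖lam‖ < 1 := by
  by_contra hcon
  push_neg at hcon
  set r := ‖lam‖ with hrdef
  have hk1 : 1 ≤ k := by omega
  have hr0 : (0:ℝ) < r := by linarith
  have hαroot' : α ^ k = ∑ i ∈ Finset.range k, α ^ i := by linarith
  have hlam' : lam ^ k = ∑ i ∈ Finset.range k, lam ^ i := by linear_combination hlam
  -- triangle inequality on the defining equation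
  have htri : r ^ k ≤ ∑ i ∈ Finset.range k, r ^ i := by
    calc r ^ k = ‖lam ^ k‖ := by rw [norm_pow]
      _ = ‖∑ i ∈ Finset.range k, lam ^ i‖ := by rw [hlam']
      _ ≤ ∑ i ∈ Finset.range k, ‖lam ^ i‖ := norm_sum_le _ _
      _ = ∑ i ∈ Finset.range k, r ^ i := by simp [norm_pow, hrdef]
  -- r ≤ α
  have hrα : r ≤ α := by
    by_contra h
    push_neg at h
    have := kb_sum_pow_lt_pow hk1 hα h hαroot'
    linarith
  -- the (x-1)·p(x) equation for lam
  have hq : lam ^ (k + 1) + 1 = 2 * lam ^ k := by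
    linear_combination (lam - 1) * hlam + geom_sum_mul lam k
  -- triangle inequality on hq
  have habs2 : ‖lam ^ (k + 1) + 1‖ = 2 * r ^ k := by
    rw [hq, norm_mul, norm_pow]
    simp [hrdef]
  have htri2 : 2 * r ^ k ≤ r ^ (k + 1) + 1 := by
    rw [← habs2]
    calc ‖lam ^ (k + 1) + 1‖ ≤ ‖lam ^ (k + 1)‖ + ‖(1:ℂ)‖ :=
          norm_add_le _ _
      _ = r ^ (k + 1) + 1 := by rw [norm_pow, norm_one]
  -- reverse inequality: (r-1)(r^k - ∑ r^i) ≤ 0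
  have hid : r ^ (k + 1) + 1 - 2 * r ^ k = (r - 1) * (r ^ k - ∑ i ∈ Finset.range k, r ^ i) := by
    linear_combination geom_sum_mul r k
  have hprod : (r - 1) * (r ^ k - ∑ i ∈ Finset.range k, r ^ i) ≤ 0 :=
    mul_nonpos_of_nonneg_of_nonpos (by linarith) (by linarith)
  have hgeq : r ^ (k + 1) + 1 = 2 * r ^ k := by linarith
  -- equality case of the triangle inequality
  have hnorm : ‖lam ^ (k + 1) + 1‖ = ‖lam ^ (k + 1)‖ + ‖(1:ℂ)‖ := by
    rw [habs2, norm_pow, norm_one]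
    linarith
  have hsr : SameRay ℝ (lam ^ (k + 1)) (1:ℂ) := sameRay_iff_norm_add.2 hnorm
  have hlamne0 : lam ≠ 0 := by
    intro h
    rw [h, norm_zero] at hrdef
    linarith
  have hzne : lam ^ (k + 1) ≠ 0 := pow_ne_zero _ hlamne0
  have harg : (lam ^ (k + 1)).arg = 0 := by
    rcases Complex.sameRay_iff.1 hsr with h | h | h
    · exact absurd h hzne
    · exact absurd h one_ne_zero
    · rw [h, Complex.arg_one]
  -- lam ^ (k+1) is a nonneg real, hence equals r^(k+1)
  have hz : lam ^ (k + 1) = ((r ^ (k + 1) : ℝ) : ℂ) := by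
    have h1 : 0 ≤ (lam ^ (k + 1)).re ∧ (lam ^ (k + 1)).im = 0 := Complex.arg_eq_zero_iff.1 harg
    have h2 : lam ^ (k + 1) = ((lam ^ (k + 1)).re : ℂ) := by
      apply Complex.ext
      · exact (Complex.ofReal_re _).symm
      · rw [Complex.ofReal_im, h1.2]
    have h3 : ‖lam ^ (k + 1)‖ = (lam ^ (k + 1)).re := by
      rw [h2, Complex.norm_real, Real.norm_eq_abs, abs_of_nonneg h1.1, Complex.ofReal_re]
    rw [h2]
    rw [norm_pow] at h3
    rw [← h3]
  -- deduce lam ^ k = r ^ k and then lam = r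
  have hzk : lam ^ k = ((r ^ k : ℝ) : ℂ) := by
    have h2l : 2 * lam ^ k = 2 * ((r ^ k : ℝ) : ℂ) := by
      rw [← hq, hz]
      exact_mod_cast congrArg (fun x : ℝ => (x : ℂ)) hgeq
    exact mul_left_cancel₀ (two_ne_zero) h2l
  have hlamr : lam = ((r : ℝ) : ℂ) := by
    have hrk : ((r ^ k : ℝ) : ℂ) ≠ 0 := by
      simp only [ne_eq, Complex.ofReal_eq_zero]
      positivity
    have hmain : lam * ((r ^ k : ℝ) : ℂ) = ((r : ℝ) : ℂ) * ((r ^ k : ℝ) : ℂ) := by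
      calc lam * ((r ^ k : ℝ) : ℂ) = lam * lam ^ k := by rw [hzk]
        _ = lam ^ (k + 1) := (pow_succ' lam k).symm
        _ = ((r ^ (k + 1) : ℝ) : ℂ) := hz
        _ = ((r : ℝ) : ℂ) * ((r ^ k : ℝ) : ℂ) := by push_cast; ring
    exact mul_right_cancel₀ hrk hmain
  -- so r is a positive real root; by monotonicity r = α
  have hrroot : r ^ k = ∑ i ∈ Finset.range k, r ^ i := by
    rw [hlamr] at hlam'
    have : (((r ^ k - ∑ i ∈ Finset.range k, r ^ i : ℝ)) : ℂ) = 0 := by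
      push_cast
      rw [hlam']
      ring
    have := Complex.ofReal_eq_zero.1 this
    linarith
  have hreq : r = α := by
    rcases lt_trichotomy r α with h | h | h
    · have := kb_pow_lt_sum_pow hk1 hr0 h hαroot'
      linarith
    · exact h
    · linarith
  exact hne (by rw [hlamr, hreq])
end

section
/- For k ≥ 2, the difference α_{k+1} − α_k of consecutive k-bonacci constants is positive and α_{k+1} − α_k < 2^{1−k}; hence the sequence of differences tends to 0. -/
open Filter

noncomputable def kbS (x : ℝ) (k : ℕ) : ℝ := ∑ j ∈ Finset.range k, (x⁻¹) ^ (j + 1)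

lemma kbS_mul_pow {x : ℝ} (hx : x ≠ 0) (k : ℕ) :
    kbS x k * x ^ k = ∑ i ∈ Finset.range k, x ^ i := by
  rw [kbS, Finset.sum_mul, ← Finset.sum_range_reflect (fun i => x ^ i) k]
  refine Finset.sum_congr rfl fun j hj => ?_
  rw [Finset.mem_range] at hj
  rw [inv_pow, inv_mul_eq_div, div_eq_iff (pow_ne_zero _ hx), ← pow_add]
  congr 1
  omega

lemma kbS_key {x : ℝ} (hx : x ≠ 0) (k : ℕ) :
    kbS x k * (x ^ k * (x - 1)) = x ^ k - 1 := by
  rw [← mul_assoc, kbS_mul_pow hx, geom_sum_mul]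

lemma kbS_le {x y : ℝ} (hx : 0 < x) (hxy : x ≤ y) (k : ℕ) : kbS y k ≤ kbS x k := by
  have hy : 0 < y := lt_of_lt_of_le hx hxy
  refine Finset.sum_le_sum fun j _ => ?_
  exact pow_le_pow_left₀ (by positivity) (inv_anti₀ hx hxy) _

lemma kbS_eq_one {x : ℝ} (hx : 0 < x) {k : ℕ}
    (hroot : x ^ k - ∑ i ∈ Finset.range k, x ^ i = 0) : kbS x k = 1 := by
  have h1 : kbS x k * x ^ k = x ^ k := by
    rw [kbS_mul_pow (ne_of_gt hx)]; linarith
  have h2 : (x : ℝ) ^ k ≠ 0 := pow_ne_zero _ (ne_of_gt hx)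
  field_simp at h1
  exact h1

lemma kbS_one_lt {x : ℝ} (hx : 0 < x) {k : ℕ} (hk : 2 ≤ k)
    (hS : kbS x k = 1) : 1 < x := by
  by_contra hle
  push_neg at hle
  have hinv : 1 ≤ x⁻¹ := (one_le_inv₀ hx).2 hle
  have : (k : ℝ) ≤ kbS x k := by
    calc (k : ℝ) = ∑ _j ∈ Finset.range k, (1 : ℝ) := by simp
    _ ≤ kbS x k := Finset.sum_le_sum fun j _ => one_le_pow₀ hinv
  rw [hS] at this
  have : (2 : ℝ) ≤ (k : ℝ) := by exact_mod_cast hk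
  linarith

lemma kbS_lt_two {x : ℝ} {k : ℕ} (hk : 1 ≤ k) (hx : 0 < x) (hS : kbS x k = 1) : x < 2 := by
  by_contra hle
  push_neg at hle
  have h2 : kbS x k ≤ kbS 2 k := kbS_le two_pos hle k
  have hkey := kbS_key (two_ne_zero (α := ℝ)) k
  have hp : (0 : ℝ) < 2 ^ k := by positivity
  nlinarith [hS, h2, hkey]

lemma nat_two_mul_lt (k : ℕ) (hk : 3 ≤ k) : 2 * k < 2 ^ k := by
  induction k with
  | zero => omega
  | succ n ih =>
    rcases Nat.lt_or_ge n 3 with hn | hn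
    · interval_cases n <;> simp_all <;> omega
    · have h2 : 2 ≤ 2 ^ n := by
        calc 2 = 2 ^ 1 := rfl
        _ ≤ 2 ^ n := Nat.pow_le_pow_right (by norm_num) (by omega)
      have := ih (by omega)
      calc 2 * (n + 1) = 2 * n + 2 := by ring
      _ < 2 ^ n + 2 := by omega
      _ ≤ 2 ^ n + 2 ^ n := by omega
      _ = 2 ^ (n + 1) := by ring

lemma half_lt_pow (k : ℕ) (hk : 2 ≤ k) : (1 / 2 : ℝ) < (1 - ((2 : ℝ) ^ k)⁻¹) ^ k := by
  rcases eq_or_lt_of_le hk with rfl | hk3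
  · norm_num
  · have hk3 : 3 ≤ k := hk3
    have hc : (0 : ℝ) < ((2 : ℝ) ^ k)⁻¹ := by positivity
    have hb : (1 : ℝ) + k * (-((2 : ℝ) ^ k)⁻¹) ≤ (1 + (-((2 : ℝ) ^ k)⁻¹)) ^ k :=
      one_add_mul_le_pow (by
        have h1le : (1 : ℝ) ≤ 2 ^ k := one_le_pow₀ (by norm_num)
        have : ((2 : ℝ) ^ k)⁻¹ ≤ 1 := inv_le_one_of_one_le₀ h1le
        linarith) k
    have hnat : 2 * (k : ℝ) < 2 ^ k := by exact_mod_cast nat_two_mul_lt k hk3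
    have hp : (0 : ℝ) < (2 : ℝ) ^ k := by positivity
    have hkc : (k : ℝ) * ((2 : ℝ) ^ k)⁻¹ < 1 / 2 := by
      rw [← div_eq_mul_inv, div_lt_iff₀ hp]
      linarith
    have : (1 : ℝ) + (-((2 : ℝ) ^ k)⁻¹) = 1 - ((2 : ℝ) ^ k)⁻¹ := by ring
    rw [this] at hb
    nlinarith

lemma kbS_lower {x : ℝ} {k : ℕ} (hk : 2 ≤ k) (hx : 0 < x) (hS : kbS x k = 1) :
    2 - 2 * ((2 : ℝ) ^ k)⁻¹ < x := by
  set b : ℝ := 2 - 2 * ((2 : ℝ) ^ k)⁻¹ with hbdef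
  have hp : (0 : ℝ) < (2 : ℝ) ^ k := by positivity
  have h4 : (4 : ℝ) ≤ (2 : ℝ) ^ k := by
    calc (4 : ℝ) = 2 ^ 2 := by norm_num
    _ ≤ 2 ^ k := pow_le_pow_right₀ (by norm_num) hk
  have hcle : ((2 : ℝ) ^ k)⁻¹ ≤ 1 / 4 := by
    rw [inv_le_comm₀ (by positivity) (by norm_num)]; linarith
  have hb1 : (1 : ℝ) < b := by rw [hbdef]; nlinarith
  have hb0 : (0 : ℝ) < b := by linarith
  -- b^k * (2 - b) = 2 * (1 - (2^k)⁻¹)^k > 1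
  have hbeq : b = 2 * (1 - ((2 : ℝ) ^ k)⁻¹) := by rw [hbdef]; ring
  have hbk : b ^ k * (2 - b) = 2 * (1 - ((2 : ℝ) ^ k)⁻¹) ^ k := by
    rw [hbeq, mul_pow]
    have : (2 : ℝ) - 2 * (1 - ((2 : ℝ) ^ k)⁻¹) = 2 * ((2 : ℝ) ^ k)⁻¹ := by ring
    rw [this]
    field_simp
  have hbig : 1 < b ^ k * (2 - b) := by
    rw [hbk]
    have := half_lt_pow k hk
    linarith
  -- hence 1 < kbS b k
  have hkey := kbS_key (ne_of_gt hb0) k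
  have hbkpos : (0 : ℝ) < b ^ k := by positivity
  have hden : (0 : ℝ) < b ^ k * (b - 1) := by nlinarith
  have hSb : 1 < kbS b k := by
    rw [← mul_lt_mul_iff_left₀ hden, hkey, one_mul]
    nlinarith
  by_contra hle
  push_neg at hle
  have := kbS_le hx hle k
  rw [hS] at this
  linarith

theorem kbonacci_root_differences (α : ℕ → ℝ)
    (h : ∀ k, 2 ≤ k → 0 < α k ∧ (α k) ^ k - ∑ i ∈ Finset.range k, (α k) ^ i = 0) :
    (∀ k, 2 ≤ k → 0 < α (k + 1) - α k ∧ α (k + 1) - α k < (2 : ℝ) ^ (1 - (k : ℤ))) ∧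
    Tendsto (fun k => α (k + 1) - α k) atTop (nhds 0) := by
  have key : ∀ k, 2 ≤ k → 0 < α (k + 1) - α k ∧
      α (k + 1) - α k < 2 * ((2 : ℝ) ^ k)⁻¹ := by
    intro k hk
    obtain ⟨hpos, hroot⟩ := h k hk
    obtain ⟨hpos', hroot'⟩ := h (k + 1) (by omega)
    have hS : kbS (α k) k = 1 := kbS_eq_one hpos hroot
    have hS' : kbS (α (k + 1)) (k + 1) = 1 := kbS_eq_one hpos' hroot'
    have h1 : 1 < α k := kbS_one_lt hpos hk hS
    have hlt2 : α (k + 1) < 2 := kbS_lt_two (by omega) hpos' hS'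
    have hlow : 2 - 2 * ((2 : ℝ) ^ k)⁻¹ < α k := kbS_lower hk hpos hS
    constructor
    · -- α k < α (k+1)
      have hterm : (0 : ℝ) < ((α k)⁻¹) ^ (k + 1) := by positivity
      have hsum : kbS (α k) (k + 1) = 1 + ((α k)⁻¹) ^ (k + 1) := by
        rw [kbS, Finset.sum_range_succ, ← kbS, hS]
      by_contra hle
      push_neg at hle
      have hmono : kbS (α k) (k + 1) ≤ kbS (α (k + 1)) (k + 1) :=
        kbS_le hpos' (by linarith) (k + 1)
      rw [hS', hsum] at hmono
      linarith
    · linarith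
  constructor
  · intro k hk
    obtain ⟨h1, h2⟩ := key k hk
    refine ⟨h1, ?_⟩
    have : (2 : ℝ) ^ (1 - (k : ℤ)) = 2 * ((2 : ℝ) ^ k)⁻¹ := by
      rw [zpow_sub₀ (two_ne_zero), zpow_one, zpow_natCast]
      ring
    rw [this]
    exact h2
  · apply squeeze_zero' (g := fun k => 2 * ((1 : ℝ) / 2) ^ k)
    · filter_upwards [eventually_atTop.2 ⟨2, fun k hk => hk⟩] with k hk
      exact le_of_lt (key k hk).1
    · filter_upwards [eventually_atTop.2 ⟨2, fun k hk => hk⟩] with k hk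
      have := (key k hk).2
      have heq : 2 * ((2 : ℝ) ^ k)⁻¹ = 2 * ((1 : ℝ) / 2) ^ k := by
        rw [one_div, inv_pow]
      linarith [heq ▸ this]
    · have : Tendsto (fun k : ℕ => ((1 : ℝ) / 2) ^ k) atTop (nhds 0) :=
        tendsto_pow_atTop_nhds_zero_of_lt_one (by norm_num) (by norm_num)
      simpa using this.const_mul 2
end
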